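/- Let n be a positive integer, ω = e^{2πi/n}, U = diag(1, ω, ..., ω^{n−1}), and for each vertex v of the orthogonality graph Ω(n) let z_v ∈ {±1}^n/√n be the corresponding unit vector. Then the projectors P_{v,k} = U^k z_v z_v† (U†)^k for k ∈ [n] form a quantum n-coloring of Ω(n): Σ_{k∈[n]} P_{v,k} = I_n for every v, and P_{v,k}P_{w,k} = 0 whenever z_v ⊥ z_w. -/
import Mathlib


open Matrix BigOperators Complex

/-- The normalized `±1` unit vector in `ℂ^n` corresponding to a vertex of the
orthogonality graph `Ω(n)`. -/
noncomputable def normVec {n : ℕ} (v : {z : Fin n → ℝ // ∀ i, z i = 1 ∨ z i = -1}) :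
    Fin n → ℂ :=
  fun i => (v.val i : ℂ) / (Real.sqrt n : ℂ)

/-- The diagonal unitary `U = diag(1, ω, …, ω^{n-1})` with `ω = e^{2πi/n}`. -/
noncomputable def omegaDiag (n : ℕ) : Matrix (Fin n) (Fin n) ℂ :=
  Matrix.diagonal fun j : Fin n => Complex.exp (2 * Real.pi * Complex.I * (j : ℕ) / n)

lemma conj_zeta_mul (n : ℕ) (j : ℕ) :
    (starRingEnd ℂ) (Complex.exp (2 * Real.pi * Complex.I * j / n)) *
      Complex.exp (2 * Real.pi * Complex.I * j / n) = 1 := by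
  rw [← Complex.exp_conj, ← Complex.exp_add]
  have : (starRingEnd ℂ) (2 * Real.pi * Complex.I * j / n) +
      2 * Real.pi * Complex.I * j / n = 0 := by
    simp only [map_div₀, _root_.map_mul, Complex.conj_I, Complex.conj_ofReal,
      map_ofNat, Complex.conj_natCast]
    ring
  rw [this, Complex.exp_zero]

lemma omega_unitary (n k : ℕ) :
    ((omegaDiag n)ᴴ) ^ k * (omegaDiag n) ^ k = 1 := by
  rw [omegaDiag, Matrix.diagonal_conjTranspose, Matrix.diagonal_pow, Matrix.diagonal_pow,
    Matrix.diagonal_mul_diagonal]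
  convert Matrix.diagonal_one with j
  simp only [Pi.pow_apply, Pi.star_apply, ← mul_pow]
  rw [Complex.star_def, conj_zeta_mul n j, one_pow]

lemma vecMulVec_mul_vecMulVec {n : ℕ} (a b c d : Fin n → ℂ) :
    vecMulVec a (star b) * vecMulVec c (star d) = (star b ⬝ᵥ c) • vecMulVec a (star d) := by
  ext i j
  simp only [Matrix.mul_apply, Matrix.vecMulVec_apply, Matrix.smul_apply, dotProduct,
    smul_eq_mul, Finset.sum_mul]
  exact Finset.sum_congr rfl fun m _ => by ring

lemma normVec_star {n : ℕ} (v : {z : Fin n → ℝ // ∀ i, z i = 1 ∨ z i = -1}) (i : Fin n) :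
    star (normVec v i) = normVec v i := by
  simp [normVec, Complex.star_def, map_div₀, Complex.conj_ofReal]

lemma normVec_mul_self {n : ℕ} (hn : 0 < n)
    (v : {z : Fin n → ℝ // ∀ i, z i = 1 ∨ z i = -1}) (i : Fin n) :
    normVec v i * normVec v i = 1 / n := by
  have hs : (Real.sqrt n : ℂ) * (Real.sqrt n : ℂ) = (n : ℂ) := by
    rw [← Complex.ofReal_mul, Real.mul_self_sqrt (Nat.cast_nonneg n)]
    norm_cast
  have hx : (v.val i : ℂ) * (v.val i : ℂ) = 1 := by
    rcases v.property i with h | h <;> rw [h] <;> norm_num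
  rw [normVec, div_mul_div_comm, hx, hs]

lemma normVec_inner_self {n : ℕ} (hn : 0 < n)
    (v : {z : Fin n → ℝ // ∀ i, z i = 1 ∨ z i = -1}) :
    star (normVec v) ⬝ᵥ normVec v = 1 := by
  have hn' : (n : ℂ) ≠ 0 := Nat.cast_ne_zero.mpr hn.ne'
  simp only [dotProduct, Pi.star_apply, normVec_star]
  rw [Finset.sum_congr rfl fun i _ => normVec_mul_self hn v i]
  simp only [Finset.sum_const, Finset.card_univ, Fintype.card_fin, nsmul_eq_mul]
  field_simp

lemma vecMulVec_star_herm {n : ℕ} (a : Fin n → ℂ) :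
    (vecMulVec a (star a))ᴴ = vecMulVec a (star a) := by
  ext i j
  simp [Matrix.conjTranspose_apply, Matrix.vecMulVec_apply, star_mul', star_star, mul_comm]

lemma proj_mul (n k : ℕ) (a b c d : Fin n → ℂ) :
    ((omegaDiag n)^k * vecMulVec a (star b) * ((omegaDiag n)ᴴ)^k) *
      ((omegaDiag n)^k * vecMulVec c (star d) * ((omegaDiag n)ᴴ)^k) =
    (star b ⬝ᵥ c) • ((omegaDiag n)^k * vecMulVec a (star d) * ((omegaDiag n)ᴴ)^k) := by
  have h := omega_unitary n k
  have e1 : vecMulVec a (star b) * (((omegaDiag n)ᴴ)^k *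
      ((omegaDiag n)^k * (vecMulVec c (star d) * ((omegaDiag n)ᴴ)^k))) =
      (star b ⬝ᵥ c) • (vecMulVec a (star d) * ((omegaDiag n)ᴴ)^k) := by
    rw [← Matrix.mul_assoc (((omegaDiag n)ᴴ)^k), h, Matrix.one_mul, ← Matrix.mul_assoc,
      vecMulVec_mul_vecMulVec, Matrix.smul_mul]
  simp only [Matrix.mul_assoc]
  rw [e1, Matrix.mul_smul]

lemma proj_apply (n k : ℕ) (a b : Fin n → ℂ) (i j : Fin n) :
    ((omegaDiag n)^k * vecMulVec a (star b) * ((omegaDiag n)ᴴ)^k) i j =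
    Complex.exp (2 * Real.pi * Complex.I * (i:ℕ) / n) ^ k * (a i * star (b j)) *
      (starRingEnd ℂ) (Complex.exp (2 * Real.pi * Complex.I * (j:ℕ) / n)) ^ k := by
  rw [omegaDiag, Matrix.diagonal_conjTranspose, Matrix.diagonal_pow, Matrix.diagonal_pow,
    Matrix.mul_diagonal, Matrix.diagonal_mul, Matrix.vecMulVec_apply]
  simp only [Pi.pow_apply, Pi.star_apply, Complex.star_def]

lemma proj_sum (n : ℕ) (hn : 0 < n) (v : {z : Fin n → ℝ // ∀ i, z i = 1 ∨ z i = -1}) :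
    ∑ k : Fin n, ((omegaDiag n) ^ (k:ℕ) * vecMulVec (normVec v) (star (normVec v)) *
      ((omegaDiag n)ᴴ) ^ (k:ℕ)) = 1 := by
  have hn' : (n : ℂ) ≠ 0 := Nat.cast_ne_zero.mpr hn.ne'
  have hprim := Complex.isPrimitiveRoot_exp n hn.ne'
  set ζ0 := Complex.exp (2 * Real.pi * Complex.I / n) with hζ0
  have hζ : ∀ m : Fin n, Complex.exp (2 * Real.pi * Complex.I * (m:ℕ) / n) = ζ0 ^ (m:ℕ) := by
    intro m
    rw [hζ0, ← Complex.exp_nat_mul]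
    congr 1
    ring
  ext i j
  rw [Matrix.sum_apply]
  simp_rw [proj_apply]
  have hterm : ∀ k : ℕ,
      Complex.exp (2 * Real.pi * Complex.I * (i:ℕ) / n) ^ k *
        (normVec v i * star (normVec v j)) *
        (starRingEnd ℂ) (Complex.exp (2 * Real.pi * Complex.I * (j:ℕ) / n)) ^ k =
      (Complex.exp (2 * Real.pi * Complex.I * (i:ℕ) / n) *
        (starRingEnd ℂ) (Complex.exp (2 * Real.pi * Complex.I * (j:ℕ) / n))) ^ k *
        (normVec v i * star (normVec v j)) := by
    intro k
    rw [mul_pow]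
    ring
  simp_rw [hterm]
  rw [← Finset.sum_mul]
  by_cases hij : i = j
  · subst hij
    have h1 : Complex.exp (2 * Real.pi * Complex.I * (i:ℕ) / n) *
        (starRingEnd ℂ) (Complex.exp (2 * Real.pi * Complex.I * (i:ℕ) / n)) = 1 := by
      rw [mul_comm]; exact conj_zeta_mul n i
    rw [h1]
    simp only [one_pow, Finset.sum_const, Finset.card_univ, Fintype.card_fin, nsmul_eq_mul,
      mul_one]
    rw [normVec_star, normVec_mul_self hn, Matrix.one_apply_eq]
    field_simp
  · have hcinv : (starRingEnd ℂ) (Complex.exp (2 * Real.pi * Complex.I * (j:ℕ) / n)) =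
        (Complex.exp (2 * Real.pi * Complex.I * (j:ℕ) / n))⁻¹ :=
      eq_inv_of_mul_eq_one_left (conj_zeta_mul n j)
    set μ := Complex.exp (2 * Real.pi * Complex.I * (i:ℕ) / n) *
      (starRingEnd ℂ) (Complex.exp (2 * Real.pi * Complex.I * (j:ℕ) / n)) with hμ
    have hμeq : μ = ζ0 ^ (i:ℕ) * (ζ0 ^ (j:ℕ))⁻¹ := by
      rw [hμ, hcinv, hζ i, hζ j]
    have hμn : μ ^ n = 1 := by
      rw [hμeq, mul_pow, inv_pow, ← pow_mul, ← pow_mul, mul_comm (i:ℕ) n, mul_comm (j:ℕ) n,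
        pow_mul, pow_mul, hprim.pow_eq_one, one_pow, one_pow, inv_one, mul_one]
    have hμ1 : μ ≠ 1 := by
      intro h
      rw [hμeq, mul_inv_eq_one₀ (pow_ne_zero _ (Complex.exp_ne_zero _))] at h
      exact hij (Fin.ext (hprim.pow_inj i.isLt j.isLt h))
    rw [Fin.sum_univ_eq_sum_range (fun k => μ ^ k) n, geom_sum_eq hμ1, hμn, sub_self,
      zero_div, zero_mul, Matrix.one_apply_ne hij]

/-- the projectors `P_{v,k} = U^k z_v z_vᴴ (Uᴴ)^k`, `k ∈ [n]`, form a
quantum `n`-coloring of the orthogonality graph `Ω(n)`: each is an orthogonal projector,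
`∑_k P_{v,k} = I_n` for every vertex `v`, and `P_{v,k} P_{w,k} = 0` whenever
`z_v ⊥ z_w`. -/
theorem stmt18 (n : ℕ) (hn : 0 < n)
    (P : {z : Fin n → ℝ // ∀ i, z i = 1 ∨ z i = -1} → Fin n →
      Matrix (Fin n) (Fin n) ℂ)
    (hP : ∀ v k, P v k = (omegaDiag n) ^ (k : ℕ) *
      Matrix.vecMulVec (normVec v) (star (normVec v)) * ((omegaDiag n)ᴴ) ^ (k : ℕ)) :
    (∀ v k, (P v k)ᴴ = P v k ∧ P v k * P v k = P v k) ∧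
    (∀ v, ∑ k : Fin n, P v k = 1) ∧
    (∀ v w, star (normVec v) ⬝ᵥ normVec w = 0 → ∀ k, P v k * P w k = 0) := by
  refine ⟨fun v k => ⟨?_, ?_⟩, fun v => ?_, fun v w h k => ?_⟩
  · rw [hP]
    simp only [Matrix.conjTranspose_mul, Matrix.conjTranspose_pow,
      Matrix.conjTranspose_conjTranspose, vecMulVec_star_herm, Matrix.mul_assoc]
  · rw [hP, proj_mul, normVec_inner_self hn, one_smul]
  · simp_rw [hP]
    exact proj_sum n hn v
  · rw [hP, hP, proj_mul, h, zero_smul]
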